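/- Let X be a Hausdorff topological space. Then the following are equivalent: (1) every locally finite family of non-empty open subsets of X is finite; (2) every countable open cover of X has a finite subfamily whose union is dense in X. -/

import Mathlib

/-- A space is *feebly compact* if every countable open cover has a finite
subfamily whose union is dense. -/
def FeeblyCompact (X : Type*) [TopologicalSpace X] : Prop :=
  ∀ C : Set (Set X), C.Countable → (∀ U ∈ C, IsOpen U) → ⋃₀ C = Set.univ →
    ∃ F : Finset (Set X), ↑F ⊆ C ∧ Dense (⋃₀ (F : Set (Set X)))

theorem locallyFinite_finite_iff_feeblyCompact {X : Type*} [TopologicalSpace X]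
    [T2Space X] :
    (∀ F : Set (Set X), (∀ U ∈ F, IsOpen U ∧ U.Nonempty) →
        (∀ x : X, ∃ V ∈ nhds x, {U | U ∈ F ∧ (U ∩ V).Nonempty}.Finite) → F.Finite)
      ↔ FeeblyCompact X := by
  classical
  constructor
  · -- (1) → (2)
    intro h C hCc hCo hCu
    rcases C.eq_empty_or_nonempty with hC | hC
    · refine ⟨∅, by simp, fun x => ?_⟩
      have hX : IsEmpty X := Set.univ_eq_empty_iff.mp (by rw [← hCu, hC, Set.sUnion_empty])
      exact hX.elim x
    · obtain ⟨f, hf⟩ := Set.Countable.exists_eq_range hCc hC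
      by_contra hcon
      push_neg at hcon
      -- the complements of closures of partial unions
      set S : ℕ → Set X := fun n => ⋃ k ∈ Finset.range (n + 1), f k with hS
      set W : ℕ → Set X := fun n => (closure (S n))ᶜ with hW
      have hfk : ∀ k n, k ≤ n → f k ⊆ S n := by
        intro k n hkn x hx
        simp only [hS, Set.mem_iUnion, Finset.mem_range]
        exact ⟨k, by omega, hx⟩
      have hWne : ∀ n, (W n).Nonempty := by
        intro n
        have hsub : ↑((Finset.range (n + 1)).image f) ⊆ C := by
          intro U hU
          simp only [Finset.coe_image, Set.mem_image] at hU
          obtain ⟨k, _, rfl⟩ := hU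
          rw [hf]; exact Set.mem_range_self k
        have hnd := hcon ((Finset.range (n + 1)).image f) hsub
        have heq : ⋃₀ ↑((Finset.range (n + 1)).image f) = S n := by
          ext x
          simp [hS, Finset.coe_image, Set.sUnion_image]
        rw [heq] at hnd
        rw [dense_iff_closure_eq] at hnd
        exact Set.nonempty_compl.2 hnd
      have hWopen : ∀ n, IsOpen (W n) := fun n => isClosed_closure.isOpen_compl
      have hWdisj : ∀ k n, k ≤ n → W n ∩ f k = ∅ := by
        intro k n hkn
        rw [Set.eq_empty_iff_forall_notMem]
        rintro x ⟨hx1, hx2⟩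
        exact hx1 (subset_closure (hfk k n hkn hx2))
      -- the family of the W n is locally finite, hence finite
      have hGfin : (Set.range W).Finite := by
        apply h
        · rintro U ⟨n, rfl⟩
          exact ⟨hWopen n, hWne n⟩
        · intro x
          have hxC : x ∈ ⋃₀ C := hCu ▸ Set.mem_univ x
          rw [hf] at hxC
          obtain ⟨U, ⟨k, rfl⟩, hxU⟩ := hxC
          refine ⟨f k, (hCo (f k) (hf ▸ Set.mem_range_self k)).mem_nhds hxU, ?_⟩
          apply Set.Finite.subset ((Set.finite_Iio k).image W)
          rintro U ⟨⟨n, rfl⟩, hne⟩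
          refine ⟨n, ?_, rfl⟩
          by_contra hnk
          simp only [Set.mem_Iio, not_lt] at hnk
          rw [hWdisj k n (by omega)] at hne
          exact hne.ne_empty rfl
      -- pigeonhole: some value of W occurs infinitely often
      have hpig : ∃ U, {n | W n = U}.Infinite := by
        by_contra hc
        push_neg at hc
        have h1 : (Set.univ : Set ℕ) ⊆ ⋃ U ∈ Set.range W, {n | W n = U} :=
          fun n _ => Set.mem_biUnion (Set.mem_range_self n) rfl
        exact Set.infinite_univ ((hGfin.biUnion fun U _ => hc U).subset h1)
      obtain ⟨U, hU⟩ := hpig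
      obtain ⟨n₀, hn₀⟩ := hU.nonempty
      have hUne : U.Nonempty := hn₀ ▸ hWne n₀
      obtain ⟨x, hx⟩ := hUne
      have hxC : x ∈ ⋃₀ C := hCu ▸ Set.mem_univ x
      rw [hf] at hxC
      obtain ⟨V, ⟨k, rfl⟩, hxV⟩ := hxC
      obtain ⟨n, hn, hkn⟩ := hU.exists_gt k
      have : x ∈ W n ∩ f k := ⟨hn ▸ hx, hxV⟩
      rw [hWdisj k n (le_of_lt hkn)] at this
      exact this
  · -- (2) → (1)
    intro hFC F hF hLF
    by_contra hinf
    have hinf' : F.Infinite := hinf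
    set e := hinf'.natEmbedding with he
    set U : ℕ → Set X := fun n => (e n : Set X) with hU
    have hUinj : Function.Injective U := Subtype.coe_injective.comp e.injective
    have hUF : ∀ n, U n ∈ F := fun n => (e n).2
    have hUo : ∀ n, IsOpen (U n) := fun n => (hF _ (hUF n)).1
    have hUne : ∀ n, (U n).Nonempty := fun n => (hF _ (hUF n)).2
    set W : ℕ → Set X := fun n => (closure (⋃ k, ⋃ (_ : n ≤ k), U k))ᶜ with hW
    have hWo : ∀ n, IsOpen (W n) := fun n => isClosed_closure.isOpen_compl
    have hWmono : Monotone W := by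
      intro n m hnm
      apply Set.compl_subset_compl.2
      apply closure_mono
      exact Set.iUnion₂_subset fun k hk => Set.subset_biUnion_of_mem (le_trans hnm hk)
    have hcover : ⋃₀ Set.range W = Set.univ := by
      rw [Set.eq_univ_iff_forall]
      intro x
      obtain ⟨V, hV, hVfin⟩ := hLF x
      have hKfin : {k | (U k ∩ V).Nonempty}.Finite := by
        have : {k | (U k ∩ V).Nonempty} = U ⁻¹' {T | T ∈ F ∧ (T ∩ V).Nonempty} := by
          ext k; simp [hUF k]
        rw [this]
        exact hVfin.preimage (hUinj.injOn)
      obtain ⟨b, hb⟩ := hKfin.bddAbove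
      have hnotcl : x ∉ closure (⋃ k, ⋃ (_ : b + 1 ≤ k), U k) := by
        intro hcl
        obtain ⟨y, hy1, hy2⟩ := (mem_closure_iff_nhds.mp hcl) V hV
        simp only [Set.mem_iUnion] at hy2
        obtain ⟨k, hk, hyk⟩ := hy2
        have hkK : k ∈ {k | (U k ∩ V).Nonempty} := ⟨y, hyk, hy1⟩
        have := hb hkK
        omega
      exact ⟨W (b + 1), Set.mem_range_self _, hnotcl⟩
    obtain ⟨Fs, hFs, hdense⟩ := hFC (Set.range W) (Set.countable_range W)
      (by rintro T ⟨n, rfl⟩; exact hWo n) hcover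
    have hidx : ∀ s ∈ Fs, ∃ n, W n = s := fun s hs => hFs hs
    set idx : Set X → ℕ := fun s => if h : ∃ n, W n = s then h.choose else 0 with hidx'
    set N := Fs.sup idx with hN
    have hsubN : ⋃₀ (Fs : Set (Set X)) ⊆ W N := by
      intro y hy
      obtain ⟨s, hs, hys⟩ := hy
      have h1 : ∃ n, W n = s := hidx s hs
      have h2 : W (idx s) = s := by
        simp only [hidx', h1, dif_pos]
        exact h1.choose_spec
      have h3 : idx s ≤ N := Finset.le_sup hs
      have h4 : y ∈ W (idx s) := by rw [h2]; exact hys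
      exact hWmono h3 h4
    have hdN : Dense (W N) := hdense.mono hsubN
    obtain ⟨y, hy1, hy2⟩ := hdN.inter_open_nonempty (U N) (hUo N) (hUne N)
    exact hy2 (subset_closure (Set.mem_iUnion₂.2 ⟨N, le_rfl, hy1⟩))
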